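/- Negative cycle detection, completeness. For the Bellman–Ford iterates d from source s: if there exists a cycle reachable from s whose total weight is negative, then there exists a vertex v with d |V| v < d (|V|−1) v; equivalently, if the iterates are unchanged from step |V| − 1 to step |V|, then no negative-weight cycle is reachable from s. -/

import Mathlib

/-- `IsWalk E p t a b` : `p 0 = a`, `p t = b`, and each consecutive pair is an edge. -/
def IsWalk {V : Type*} (E : V → V → Prop) (p : ℕ → V) (t : ℕ) (a b : V) : Prop :=
  p 0 = a ∧ p t = b ∧ ∀ i < t, E (p i) (p (i + 1))

/-- Weight of a walk with `t` edges. -/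
def walkWeight {V : Type*} (w : V → V → ℝ) (p : ℕ → V) (t : ℕ) : ℝ :=
  ∑ i ∈ Finset.range t, w (p i) (p (i + 1))

open Classical in
/-- Bellman–Ford iterates from source `s`. -/
noncomputable def BF {V : Type*} (E : V → V → Prop) (w : V → V → ℝ) (s : V) :
    ℕ → V → EReal
  | 0, v => if v = s then 0 else ⊤
  | (t + 1), v =>
      min (BF E w s t v) (⨅ u : {u : V // E u v}, (BF E w s t u.1 + (w u.1 v : EReal)))

set_option linter.unusedSectionVars false

section
variable {V : Type*} [Fintype V] [Nonempty V] (E : V → V → Prop) (w : V → V → ℝ) (s : V)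

lemma BF_succ (t : ℕ) (v : V) : BF E w s (t+1) v =
    min (BF E w s t v) (⨅ u : {u : V // E u v}, (BF E w s t u.1 + (w u.1 v : EReal))) := rfl

lemma BF_succ_le (t : ℕ) (v : V) : BF E w s (t+1) v ≤ BF E w s t v := min_le_left _ _

lemma BF_anti {t t' : ℕ} (h : t ≤ t') (v : V) : BF E w s t' v ≤ BF E w s t v := by
  induction t' with
  | zero => simp_all
  | succ t' ih =>
    rcases Nat.lt_or_ge t (t'+1) with h' | h'
    · exact le_trans (BF_succ_le E w s t' v) (ih (Nat.lt_succ_iff.mp h'))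
    · have : t = t' + 1 := le_antisymm h h'
      subst this; rfl

lemma BF_ne_bot (t : ℕ) (v : V) : BF E w s t v ≠ ⊥ := by
  induction t generalizing v with
  | zero => simp only [BF]; split <;> simp
  | succ t ih =>
    rw [BF_succ]
    refine ne_of_gt (lt_min (bot_lt_iff_ne_bot.mpr (ih v)) ?_)
    rcases isEmpty_or_nonempty {u : V // E u v} with he | hne
    · rw [iInf_of_empty]; exact bot_lt_top
    · obtain ⟨i₀, hi₀⟩ := Finite.exists_min
        (fun u : {u : V // E u v} => BF E w s t u.1 + (w u.1 v : EReal))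
      have : (⨅ u : {u : V // E u v}, (BF E w s t u.1 + (w u.1 v : EReal)))
          = BF E w s t i₀.1 + (w i₀.1 v : EReal) :=
        le_antisymm (iInf_le _ i₀) (le_iInf hi₀)
      rw [this]
      refine bot_lt_iff_ne_bot.mpr ?_
      simp [EReal.add_eq_bot_iff, ih]

lemma BF_stab (n : ℕ) (h : ∀ v, BF E w s (n+1) v = BF E w s n v) :
    ∀ t, n ≤ t → ∀ v, BF E w s t v = BF E w s n v := by
  intro t ht
  induction t with
  | zero => intro v; cases Nat.le_zero.mp ht; rfl
  | succ t ih =>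
    rcases Nat.lt_or_ge n (t+1) with h' | h'
    · have hnt : n ≤ t := Nat.lt_succ_iff.mp h'
      intro v
      have e1 : BF E w s (t+1) v
          = min (BF E w s n v) (⨅ u : {u : V // E u v}, (BF E w s n u.1 + (w u.1 v : EReal))) := by
        rw [BF_succ]
        congr 1
        · exact ih hnt v
        · exact iInf_congr fun u => by rw [ih hnt u.1]
      rw [e1, ← BF_succ, h v]
    · have : n = t + 1 := le_antisymm ht h'
      subst this; intro v; rfl

lemma BF_walk_le (p : ℕ → V) (t : ℕ) (v : V) (hw : IsWalk E p t s v) :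
    BF E w s t v ≤ (walkWeight w p t : EReal) := by
  induction t generalizing v with
  | zero =>
    obtain ⟨h0, ht, _⟩ := hw
    have : v = s := by rw [← ht, h0]
    simp [BF, this, walkWeight]
  | succ t ih =>
    obtain ⟨h0, ht, he⟩ := hw
    have hedge : E (p t) v := by rw [← ht]; exact he t (Nat.lt_succ_self t)
    have h1 : BF E w s (t+1) v ≤ BF E w s t (p t) + (w (p t) v : EReal) :=
      le_trans (min_le_right _ _) (iInf_le (fun u : {u : V // E u v} => BF E w s t u.1 + (w u.1 v : EReal)) ⟨p t, hedge⟩)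
    have h2 : BF E w s t (p t) ≤ (walkWeight w p t : EReal) :=
      ih (p t) ⟨h0, rfl, fun i hi => he i (hi.trans (Nat.lt_succ_self t))⟩
    calc BF E w s (t+1) v ≤ BF E w s t (p t) + (w (p t) v : EReal) := h1
      _ ≤ (walkWeight w p t : EReal) + (w (p t) v : EReal) := add_le_add_left h2 _
      _ = (walkWeight w p (t+1) : EReal) := by
          rw [← EReal.coe_add]
          norm_cast
          rw [walkWeight, walkWeight, Finset.sum_range_succ, ht]
end


/-- Negative cycle detection, completeness: a negative-weight cycle reachable
from `s` forces a strict improvement at step `|V|`. -/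
theorem bellmanFord_negCycle_complete
    {V : Type*} [Fintype V] [Nonempty V]
    (E : V → V → Prop) (w : V → V → ℝ) (s : V)
    (hcyc : ∃ (c : V) (p : ℕ → V) (l : ℕ), 1 ≤ l ∧ IsWalk E p l c c ∧
      (∃ (q : ℕ → V) (lq : ℕ), IsWalk E q lq s c) ∧ walkWeight w p l < 0) :
    ∃ v : V, BF E w s (Fintype.card V) v < BF E w s (Fintype.card V - 1) v := by
  by_contra hcon
  push_neg at hcon
  obtain ⟨c, p, l, hl, hwalk, ⟨q, lq, hq⟩, hneg⟩ := hcyc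
  have hN : 1 ≤ Fintype.card V := Fintype.card_pos
  set n := Fintype.card V - 1 with hn
  have hNn : Fintype.card V = n + 1 := (Nat.succ_pred_eq_of_pos hN).symm
  have hfix : ∀ v, BF E w s (n+1) v = BF E w s n v := by
    intro v
    refine le_antisymm (BF_succ_le E w s n v) ?_
    have := hcon v
    rwa [hNn] at this
  have hstab := BF_stab E w s n hfix
  -- edge relaxation at fixed point
  have hrelax : ∀ u v : V, E u v → BF E w s n v ≤ BF E w s n u + (w u v : EReal) := by
    intro u v h
    rw [← hfix v]
    exact le_trans (min_le_right _ _) (iInf_le (fun x : {x : V // E x v} => BF E w s n x.1 + (w x.1 v : EReal)) ⟨u, h⟩)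
  -- c is reachable, hence finite at fixed point
  have htopc : BF E w s n c ≠ ⊤ := by
    have h1 : BF E w s n c ≤ BF E w s lq c := by
      rcases le_total lq n with h | h
      · exact BF_anti E w s h c
      · rw [hstab lq h c]
    have h2 := BF_walk_le E w s q lq c hq
    exact ne_top_of_le_ne_top (EReal.coe_ne_top _) (h1.trans h2)
  -- finiteness along the cycle
  have hfin : ∀ i ≤ l, BF E w s n (p i) ≠ ⊤ := by
    intro i
    induction i with
    | zero => intro _; rw [hwalk.1]; exact htopc
    | succ i ih =>
      intro hil
      have hi : i < l := Nat.lt_of_succ_le hil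
      have hedge : E (p i) (p (i+1)) := hwalk.2.2 i hi
      have := hrelax (p i) (p (i+1)) hedge
      exact ne_top_of_le_ne_top
        (ne_of_lt (EReal.add_lt_top (ih hi.le) (EReal.coe_ne_top _))) this
  -- real-valued inequality along edges of the cycle
  have hr : ∀ i < l, (BF E w s n (p (i+1))).toReal
      ≤ (BF E w s n (p i)).toReal + w (p i) (p (i+1)) := by
    intro i hi
    have hedge : E (p i) (p (i+1)) := hwalk.2.2 i hi
    have hle := hrelax (p i) (p (i+1)) hedge
    have hb1 := BF_ne_bot E w s n (p i)
    have ht1 := hfin i hi.le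
    have := EReal.toReal_le_toReal hle (BF_ne_bot E w s n (p (i+1)))
      (ne_of_lt (EReal.add_lt_top ht1 (EReal.coe_ne_top _)))
    rwa [EReal.toReal_add ht1 hb1 (EReal.coe_ne_top _) (EReal.coe_ne_bot _),
      EReal.toReal_coe] at this
  -- summing around the cycle
  have hsum : ∀ j ≤ l, (BF E w s n (p j)).toReal
      ≤ (BF E w s n (p 0)).toReal + walkWeight w p j := by
    intro j
    induction j with
    | zero => intro _; simp [walkWeight]
    | succ j ih =>
      intro hjl
      have hj : j < l := Nat.lt_of_succ_le hjl
      have := hr j hj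
      have h2 := ih hj.le
      rw [walkWeight, Finset.sum_range_succ, ← walkWeight]
      linarith
  have hend := hsum l le_rfl
  have hpl : p l = p 0 := by rw [hwalk.2.1, hwalk.1]
  rw [hpl] at hend
  linarith
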